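/- For a tracing-deterministic filter over a unitary alphabet, nondeterminism gives no size advantage: if F is a tracing-deterministic filter with |Y(F)| = 1, then there exists a tracing-deterministic filter F† that output simulates F such that no filter whatsoever (tracing-deterministic or tracing-nondeterministic) with fewer states than F† output simulates F. -/

import Mathlib

/-- A procrustean filter with state type `V`, observation alphabet `Y`, and output set `C`:
initial states `V0`, transition labeling `tr`, and nonempty output sets `out`. -/
structure PFilter (V Y C : Type) where
  V0 : Set V
  tr : V → V → Set Y
  out : V → Set C
  out_ne : ∀ v, (out v).Nonempty

namespace PFilter

variable {V V' V'' Y C : Type}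

/-- One step of tracing: states reachable from some state of `S` along a `y`-labeled edge. -/
def step (F : PFilter V Y C) (S : Set V) (y : Y) : Set V :=
  {w | ∃ v ∈ S, y ∈ F.tr v w}

/-- `V_F(s)`: the set of states reached by the string `s` from some initial state. -/
def reached (F : PFilter V Y C) (s : List Y) : Set V :=
  s.foldl F.step F.V0

/-- The interaction language `L(F)`. -/
def lang (F : PFilter V Y C) : Set (List Y) :=
  {s | (F.reached s).Nonempty}

/-- `C_F(s)`: the set of outputs produced for a string `s`. -/
def outputs (F : PFilter V Y C) (s : List Y) : Set C :=
  ⋃ w ∈ F.reached s, F.out w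

/-- `F'` output simulates `F`: language inclusion and output compatibility. -/
def OutputSimulates (F' : PFilter V' Y C) (F : PFilter V Y C) : Prop :=
  F.lang ⊆ F'.lang ∧ ∀ s ∈ F.lang, F'.outputs s ⊆ F.outputs s

/-- Tracing-deterministic: one initial state and disjoint labels on departing edges. -/
def TracingDet (F : PFilter V Y C) : Prop :=
  (∃ v0 : V, F.V0 = {v0}) ∧
  ∀ v1 v2 v3 : V, v2 ≠ v3 → F.tr v1 v2 ∩ F.tr v1 v3 = ∅

/-- Vertex single-output: every state has exactly one output. -/
def VertexSingle (F : PFilter V Y C) : Prop :=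
  ∀ v : V, ∃ a : C, F.out v = {a}

/-- String single-output: every string in the language has exactly one output. -/
def StringSingle (F : PFilter V Y C) : Prop :=
  ∀ s ∈ F.lang, ∃ a : C, F.outputs s = {a}

/-- The tensor product of two filters (outputs taken from the first component;
only the transition structure matters for reachability statements). -/
def tensor (F : PFilter V Y C) (F' : PFilter V' Y C) : PFilter (V × V') Y C where
  V0 := F.V0 ×ˢ F'.V0
  tr p q := F.tr p.1 q.1 ∩ F'.tr p.2 q.2
  out p := F.out p.1
  out_ne p := F.out_ne p.1

end PFilter

namespace PFilterAux

open PFilter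

variable {V W Y C : Type}

lemma reached_append (G : PFilter W Y C) (s : List Y) (z : Y) :
    G.reached (s ++ [z]) = G.step (G.reached s) z := by
  simp [reached, List.foldl_append]

lemma reached_replicate_succ (G : PFilter W Y C) (k : ℕ) (y : Y) :
    G.reached (List.replicate (k+1) y) = G.step (G.reached (List.replicate k y)) y := by
  rw [List.replicate_succ', reached_append]

lemma step_empty (G : PFilter W Y C) (z : Y) : G.step ∅ z = ∅ := by
  ext w; simp [step]

lemma reached_replicate_empty (G : PFilter W Y C) (y : Y) {k l : ℕ}
    (hk : G.reached (List.replicate k y) = ∅) (hkl : k ≤ l) :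
    G.reached (List.replicate l y) = ∅ := by
  induction l, hkl using Nat.le_induction with
  | base => exact hk
  | succ l hl ih => rw [reached_replicate_succ, ih, step_empty]

lemma exists_path (G : PFilter W Y C) (y : Y) :
    ∀ (k : ℕ) (u : W), u ∈ G.reached (List.replicate k y) →
    ∃ w : ℕ → W, w 0 ∈ G.V0 ∧ (∀ t, t < k → y ∈ G.tr (w t) (w (t+1))) ∧
      (∀ t, t ≤ k → w t ∈ G.reached (List.replicate t y)) := by
  intro k
  have main : ∀ (k : ℕ) (u : W), u ∈ G.reached (List.replicate k y) →
      ∃ w : ℕ → W, w 0 ∈ G.V0 ∧ (∀ t, t < k → y ∈ G.tr (w t) (w (t+1))) ∧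
      (∀ t, t ≤ k → w t ∈ G.reached (List.replicate t y)) ∧ w k = u := by
    intro k
    induction k with
    | zero =>
      intro u hu
      refine ⟨fun _ => u, hu, by omega, ?_, rfl⟩
      intro t ht
      interval_cases t
      exact hu
    | succ k ih =>
      intro u hu
      rw [reached_replicate_succ] at hu
      obtain ⟨u', hu', hedge⟩ := hu
      obtain ⟨w, h0, hE, hR, hk⟩ := ih u' hu'
      refine ⟨fun t => if t ≤ k then w t else u, by simp [h0], ?_, ?_, by simp⟩
      · intro t ht
        rcases Nat.lt_or_ge t k with h | h
        · simpa [Nat.le_of_lt h, Nat.succ_le_of_lt h] using hE t h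
        · have htk : t = k := by omega
          subst htk
          simpa [hk] using hedge
      · intro t ht
        rcases Nat.lt_or_ge t (k+1) with h | h
        · have : t ≤ k := by omega
          simpa [this] using hR t this
        · have htk : t = k + 1 := by omega
          subst htk
          simp only [Nat.not_succ_le_self, if_neg, show ¬ (k+1 ≤ k) by omega]
          rw [reached_replicate_succ]
          exact ⟨u', hu', hedge⟩
  intro u hu
  obtain ⟨w, h0, hE, hR, -⟩ := main k u hu
  exact ⟨w, h0, hE, hR⟩

/-- The deterministic "line/lasso" filter on `Fin j`. -/
def lineF (Y C : Type) (j : ℕ) (nxt : Fin j → Option (Fin j)) (o : Fin j → Set C)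
    (ho : ∀ a, (o a).Nonempty) (z0 : Fin j) : PFilter (Fin j) Y C where
  V0 := {z0}
  tr a b := if nxt a = some b then Set.univ else ∅
  out := o
  out_ne := ho

lemma lineF_det (j : ℕ) (nxt : Fin j → Option (Fin j)) (o : Fin j → Set C)
    (ho : ∀ a, (o a).Nonempty) (z0 : Fin j) :
    (lineF Y C j nxt o ho z0).TracingDet := by
  refine ⟨⟨z0, rfl⟩, fun a b c hbc => ?_⟩
  ext z
  simp only [lineF, Set.mem_inter_iff, Set.mem_empty_iff_false, iff_false, not_and]
  intro h1 h2
  split_ifs at h1 h2 with hb hc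
  · exact hbc (Option.some_injective _ (hb.symm.trans hc))
  all_goals simp_all

def orun (j : ℕ) (nxt : Fin j → Option (Fin j)) (z0 : Fin j) : ℕ → Option (Fin j)
  | 0 => some z0
  | k+1 => (orun j nxt z0 k).bind nxt

lemma lineF_reached (j : ℕ) (nxt : Fin j → Option (Fin j)) (o : Fin j → Set C)
    (ho : ∀ a, (o a).Nonempty) (z0 : Fin j) (s : List Y) :
    (lineF Y C j nxt o ho z0).reached s = {b | orun j nxt z0 s.length = some b} := by
  induction s using List.reverseRecOn with
  | nil =>
    ext b
    simp [reached, lineF, orun, eq_comm]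
  | append_singleton s z ih =>
    rw [reached_append, ih]
    ext c
    simp only [step, Set.mem_setOf_eq, List.length_append, List.length_singleton, orun,
      Option.bind_eq_some_iff]
    constructor
    · rintro ⟨b, hb, hz⟩
      refine ⟨b, hb, ?_⟩
      by_cases h : nxt b = some c
      · exact h
      · simp [lineF, h] at hz
    · rintro ⟨b, hb, hz⟩
      exact ⟨b, hb, by simp [lineF, hz]⟩

lemma lineF_outputs (j : ℕ) (nxt : Fin j → Option (Fin j)) (o : Fin j → Set C)
    (ho : ∀ a, (o a).Nonempty) (z0 : Fin j) (s : List Y) (r : Fin j)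
    (hr : orun j nxt z0 s.length = some r) :
    (lineF Y C j nxt o ho z0).outputs s = o r := by
  have hset : (lineF Y C j nxt o ho z0).reached s = {r} := by
    rw [lineF_reached]
    ext b
    simp [hr, eq_comm]
  rw [outputs, hset]
  simp [lineF]

/-- Core lemma: from any output simulator `G` of `F` we extract a tracing-deterministic
output simulator on `Fin j` with `j ≤ card W`. -/
lemma core {V W Y C : Type} [Fintype W] (F : PFilter V Y C) (y : Y)
    (hY : ∀ z : Y, z = y) (hnil : [] ∈ F.lang)
    (G : PFilter W Y C) (hG : G.OutputSimulates F) :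
    ∃ j, j ≤ Fintype.card W ∧ ∃ D : PFilter (Fin j) Y C,
      D.TracingDet ∧ D.OutputSimulates F := by
  classical
  set m := Fintype.card W with hm_def
  have hrep : ∀ s : List Y, s = List.replicate s.length y := fun s =>
    List.eq_replicate_of_mem (fun b _ => hY b)
  by_cases hm : (G.reached (List.replicate m y)).Nonempty
  · -- lasso case
    obtain ⟨u, hu⟩ := hm
    obtain ⟨w, h0, hE, hR⟩ := exists_path G y m u hu
    have hninj : ¬ Function.Injective (fun t : Fin (m+1) => w t.val) := by
      intro hinj
      have := Fintype.card_le_of_injective _ hinj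
      simp [hm_def] at this
    rw [Function.not_injective_iff] at hninj
    obtain ⟨i, j, hw, hij⟩ := hninj
    -- wlog i < j
    obtain ⟨iN, jN, hiltj, hwe⟩ : ∃ iN jN : ℕ, iN < jN ∧ jN ≤ m ∧ w iN = w jN := by
      rcases lt_or_gt_of_ne hij with h | h
      · exact ⟨i.val, j.val, h, by omega, hw⟩
      · exact ⟨j.val, i.val, h, by omega, hw.symm⟩
    obtain ⟨hjle, hwe⟩ := hwe
    have hipos : iN < jN := hiltj
    set nxt : Fin jN → Option (Fin jN) := fun a =>
      if h : a.val + 1 < jN then some ⟨a.val + 1, h⟩ else some ⟨iN, hipos⟩ with hnxt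
    have hz0 : (0 : ℕ) < jN := by omega
    set z0 : Fin jN := ⟨0, hz0⟩ with hz0def
    set o : Fin jN → Set C := fun a => G.out (w a.val) with ho_def
    set D := lineF Y C jN nxt o (fun a => G.out_ne _) z0 with hD
    have hinv : ∀ k : ℕ, ∃ r : Fin jN, orun jN nxt z0 k = some r ∧
        w r.val ∈ G.reached (List.replicate k y) := by
      intro k
      induction k with
      | zero => exact ⟨z0, rfl, h0⟩
      | succ k ih =>
        obtain ⟨r, hr, hmem⟩ := ih
        have hrun : orun jN nxt z0 (k+1) = nxt r := by simp [orun, hr]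
        by_cases h : r.val + 1 < jN
        · refine ⟨⟨r.val + 1, h⟩, by rw [hrun, hnxt]; simp [h], ?_⟩
          rw [reached_replicate_succ]
          exact ⟨w r.val, hmem, hE r.val (by omega)⟩
        · have hr1 : r.val + 1 = jN := by omega
          refine ⟨⟨iN, hipos⟩, by rw [hrun, hnxt]; simp [h], ?_⟩
          rw [reached_replicate_succ]
          refine ⟨w r.val, hmem, ?_⟩
          have : y ∈ G.tr (w r.val) (w (r.val + 1)) := hE r.val (by omega)
          rwa [hr1, ← hwe] at this
    refine ⟨jN, by omega, D, lineF_det _ _ _ _ _, ?_, ?_⟩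
    · intro s _
      obtain ⟨r, hr, -⟩ := hinv s.length
      refine ⟨r, ?_⟩
      rw [hD, lineF_reached]
      exact hr
    · intro s hs
      obtain ⟨r, hr, hmem⟩ := hinv s.length
      rw [hD, lineF_outputs jN nxt o _ z0 s r hr]
      have hmem' : w r.val ∈ G.reached s := by rwa [← hrep s] at hmem
      have h1 : o r ⊆ G.outputs s := fun c hc => Set.mem_biUnion hmem' hc
      exact h1.trans (hG.2 s hs)
  · -- line case
    rw [Set.not_nonempty_iff_eq_empty] at hm
    have hex : ∃ k, G.reached (List.replicate k y) = ∅ := ⟨m, hm⟩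
    set N := Nat.find hex with hN_def
    have hNempty : G.reached (List.replicate N y) = ∅ := Nat.find_spec hex
    have hNle : N ≤ m := Nat.find_le hm
    have hNpos : 0 < N := by
      by_contra h
      push_neg at h
      have hz : N = 0 := by omega
      have hne : ([] : List Y) ∈ G.lang := hG.1 hnil
      obtain ⟨v, hv⟩ := hne
      have hmem : v ∈ G.reached (List.replicate N y) := by rw [hz]; simpa using hv
      rw [hNempty] at hmem
      exact hmem
    have hlt : ∀ k, k < N → (G.reached (List.replicate k y)).Nonempty := fun k hk =>
      Set.nonempty_iff_ne_empty.mpr (Nat.find_min hex hk)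
    obtain ⟨u, hu⟩ := hlt (N-1) (by omega)
    obtain ⟨w, h0, hE, hR⟩ := exists_path G y (N-1) u hu
    set nxt : Fin N → Option (Fin N) := fun a =>
      if h : a.val + 1 < N then some ⟨a.val + 1, h⟩ else none with hnxt
    set z0 : Fin N := ⟨0, hNpos⟩ with hz0def
    set o : Fin N → Set C := fun a => G.out (w a.val) with ho_def
    set D := lineF Y C N nxt o (fun a => G.out_ne _) z0 with hD
    have hrun : ∀ k, orun N nxt z0 k = if h : k < N then some ⟨k, h⟩ else none := by
      intro k
      induction k with
      | zero => simp [orun, hz0def, hNpos]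
      | succ k ih =>
        by_cases h : k < N
        · by_cases h2 : k + 1 < N
          · show (orun N nxt z0 k).bind nxt = _
            rw [ih, dif_pos h]
            simp [hnxt, h2]
          · show (orun N nxt z0 k).bind nxt = _
            rw [ih, dif_pos h]
            simp [hnxt, h2]
        · have h3 : ¬ (k + 1 < N) := by omega
          simp [orun, ih, h, h3]
    have hlen : ∀ s ∈ F.lang, s.length < N := by
      intro s hs
      by_contra hle
      push_neg at hle
      have h1 : (G.reached s).Nonempty := hG.1 hs
      rw [hrep s] at h1
      rw [reached_replicate_empty G y hNempty hle] at h1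
      exact absurd h1 (by simp)
    refine ⟨N, hNle, D, lineF_det _ _ _ _ _, ?_, ?_⟩
    · intro s hs
      have hk := hlen s hs
      refine ⟨⟨s.length, hk⟩, ?_⟩
      rw [hD, lineF_reached, Set.mem_setOf_eq, hrun, dif_pos hk]
    · intro s hs
      have hk := hlen s hs
      have hr : orun N nxt z0 s.length = some ⟨s.length, hk⟩ := by
        rw [hrun, dif_pos hk]
      rw [hD, lineF_outputs N nxt o _ z0 s _ hr]
      have hmem : w s.length ∈ G.reached s := by
        have h2 := hR s.length (by omega)
        rwa [← hrep s] at h2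
      have h1 : o ⟨s.length, hk⟩ ⊆ G.outputs s := fun c hc => Set.mem_biUnion hmem hc
      exact h1.trans (hG.2 s hs)

end PFilterAux

/-- For a tracing-deterministic filter over a unitary alphabet, nondeterminism
gives no size advantage: there is a tracing-deterministic output simulator `F†` such that no
filter whatsoever with fewer states output simulates `F`. -/
theorem unitary_no_nondeterministic_advantage {V Y C : Type} [Fintype V] [Nonempty V]
    (F : PFilter V Y C) (y : Y) (hY : ∀ z : Y, z = y)
    (hdet : F.TracingDet) :
    ∃ (n : ℕ) (Fdag : PFilter (Fin n) Y C),
      Fdag.TracingDet ∧ Fdag.OutputSimulates F ∧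
      ∀ (W : Type) [Fintype W] (G : PFilter W Y C),
        G.OutputSimulates F → n ≤ Fintype.card W := by
  classical
  obtain ⟨v0, hv0⟩ := hdet.1
  have hnil : [] ∈ F.lang := ⟨v0, by simp [PFilter.reached, hv0]⟩
  have hself : F.OutputSimulates F := ⟨fun s hs => hs, fun s _ c hc => hc⟩
  have hPex : ∃ n, ∃ D : PFilter (Fin n) Y C, D.TracingDet ∧ D.OutputSimulates F := by
    obtain ⟨j, -, D, h1, h2⟩ := PFilterAux.core F y hY hnil F hself
    exact ⟨j, D, h1, h2⟩
  obtain ⟨D, hD1, hD2⟩ := Nat.find_spec hPex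
  refine ⟨Nat.find hPex, D, hD1, hD2, fun W _ G hG => ?_⟩
  obtain ⟨j, hj, D', h1, h2⟩ := PFilterAux.core F y hY hnil G hG
  exact le_trans (Nat.find_le ⟨D', h1, h2⟩) hj
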